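/- arXiv:1804.04239 — 3 statements merged into one kernel-verified Lean document; each statement's English description precedes it below -/
import Mathlib

section
/- For all positive reals x and y, 2x·log(x) + 2y·log(y) + 2xy/(x+y) ≤ 2(x+y)·log(x+y). -/
theorem stmt_2 (x y : ℝ) (hx : 0 < x) (hy : 0 < y) :
    2 * x * Real.log x + 2 * y * Real.log y + 2 * x * y / (x + y)
      ≤ 2 * (x + y) * Real.log (x + y) := by
  have hxy : 0 < x + y := by linarith
  have h1 : Real.log (x / (x + y)) ≤ x / (x + y) - 1 :=
    Real.log_le_sub_one_of_pos (by positivity)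
  have h2 : Real.log (y / (x + y)) ≤ y / (x + y) - 1 :=
    Real.log_le_sub_one_of_pos (by positivity)
  rw [Real.log_div hx.ne' hxy.ne'] at h1
  rw [Real.log_div hy.ne' hxy.ne'] at h2
  have h1' : (Real.log x - Real.log (x + y)) * (x + y) ≤ x - (x + y) := by
    have := sub_le_sub_right h1 0
    nlinarith [div_mul_cancel₀ x hxy.ne']
  have h2' : (Real.log y - Real.log (x + y)) * (x + y) ≤ y - (x + y) := by
    nlinarith [div_mul_cancel₀ y hxy.ne']
  nlinarith [mul_le_mul_of_nonneg_left h1' (le_of_lt hx),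
    mul_le_mul_of_nonneg_left h2' (le_of_lt hy), mul_pos hx hy,
    div_mul_cancel₀ (2*x*y) hxy.ne']
end

section
/- Let X_1, ..., X_k be i.i.d. exponential random variables with rate 1, and let Z_i be the indicator of the event X_i ≥ max_j X_j - c for a fixed constant c > 0. Then E[Σ_i Z_i] = 1 + Σ_{i=1}^{k-1} (1 - e^{-c})^i, and in particular E[Σ_i Z_i] ≤ e^c. -/
open MeasureTheory ProbabilityTheory
open scoped Classical
open Real Set Filter Topology

lemma aux_integral (c : ℝ) (hc : 0 < c) (n : ℕ) :
    ∫ y in Ioi (0:ℝ), exp (-y) * (1 - exp (-(y + c))) ^ n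
      = (1 - (1 - exp (-c)) ^ (n + 1)) / ((n + 1) * exp (-c)) := by
  have ha : (0:ℝ) < exp (-c) := exp_pos _
  have hkey : ∀ y : ℝ, exp (-(y + c)) = exp (-c) * exp (-y) := by
    intro y; rw [← exp_add]; ring_nf
  set g : ℝ → ℝ := fun y => (1 - exp (-c) * exp (-y)) ^ (n + 1) / ((n + 1) * exp (-c)) with hg
  have hderiv : ∀ y : ℝ, HasDerivAt g (exp (-y) * (1 - exp (-(y + c))) ^ n) y := by
    intro y
    have h1 : HasDerivAt (fun y : ℝ => exp (-y)) (-exp (-y)) y := by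
      simpa using (hasDerivAt_neg y).exp
    have h2 : HasDerivAt (fun y : ℝ => 1 - exp (-c) * exp (-y)) (exp (-c) * exp (-y)) y := by
      simpa using ((h1.const_mul (exp (-c))).const_sub 1)
    have h3 := (h2.pow (n + 1)).div_const ((n + 1) * exp (-c))
    refine h3.congr_deriv ?_
    rw [hkey, Nat.add_sub_cancel]; push_cast
    field_simp
  have hcont : ContinuousOn g (Ici 0) := by
    apply Continuous.continuousOn
    fun_prop
  have hint : IntegrableOn (fun y => exp (-y) * (1 - exp (-(y + c))) ^ n) (Ioi (0:ℝ)) := by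
    have hbase : IntegrableOn (fun y : ℝ => exp (-1 * y)) (Ioi (0:ℝ)) :=
      exp_neg_integrableOn_Ioi 0 one_pos
    refine Integrable.mono (by simpa [IntegrableOn] using hbase) ?_ ?_
    · exact (Continuous.aestronglyMeasurable (by fun_prop)).restrict
    · filter_upwards [ae_restrict_mem measurableSet_Ioi] with y hy
      have hy0 : (0:ℝ) < y := hy
      have h1 : 0 ≤ 1 - exp (-(y + c)) := by
        have : exp (-(y + c)) ≤ 1 := exp_le_one_iff.2 (by linarith)
        linarith
      have h2 : 1 - exp (-(y + c)) ≤ 1 := by linarith [exp_pos (-(y + c))]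
      have hb : exp (-y) * (1 - exp (-(y+c))) ^ n ≤ exp (-y) * 1 := by
        gcongr
        exact pow_le_one₀ h1 h2
      simp only [Real.norm_eq_abs, abs_of_nonneg (mul_nonneg (exp_pos (-y)).le (pow_nonneg h1 n)),
        neg_one_mul]
      simpa using hb
  have htend : Tendsto g atTop (𝓝 (1 / ((n + 1) * exp (-c)))) := by
    have h0 : Tendsto (fun y : ℝ => exp (-y)) atTop (𝓝 0) := tendsto_exp_neg_atTop_nhds_zero
    have hcg : Continuous (fun t : ℝ => (1 - exp (-c) * t) ^ (n + 1) / ((n + 1) * exp (-c))) := by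
      fun_prop
    have := (hcg.continuousAt (x := (0:ℝ))).tendsto.comp h0
    simpa [g, Function.comp_def] using this
  have := integral_Ioi_of_hasDerivAt_of_tendsto (f := g)
      (f' := fun y => exp (-y) * (1 - exp (-(y + c))) ^ n)
      (a := 0) (hcont.continuousWithinAt self_mem_Ici) (fun x _ => hderiv x) hint htend
  rw [this]
  simp only [hg, neg_zero, exp_zero, mul_one]
  field_simp

lemma aux_expMeasure_Iic (x : ℝ) :
    expMeasure 1 (Iic x) = ENNReal.ofReal (if 0 ≤ x then 1 - exp (-x) else 0) := by
  have h : expMeasure 1 = volume.withDensity (exponentialPDF 1) := rfl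
  rw [h, withDensity_apply _ measurableSet_Iic]
  simpa using lintegral_exponentialPDF_eq_antiDeriv one_pos x

lemma aux_map_eq {Ω : Type*} [MeasurableSpace Ω] (μ : Measure Ω) [IsProbabilityMeasure μ]
    (Y : Ω → ℝ) (hm : Measurable Y)
    (hd : ∀ t : ℝ, 0 ≤ t → μ {ω | t < Y ω} = ENNReal.ofReal (exp (-t))) :
    μ.map Y = expMeasure 1 := by
  haveI : IsProbabilityMeasure (μ.map Y) := Measure.isProbabilityMeasure_map hm.aemeasurable
  refine Measure.ext_of_Iic _ _ (fun t => ?_)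
  rw [Measure.map_apply hm measurableSet_Iic, aux_expMeasure_Iic]
  have hpre : Y ⁻¹' Iic t = {ω | t < Y ω}ᶜ := by
    ext ω; simp [not_lt]
  have hms : ∀ u : ℝ, MeasurableSet {ω | u < Y ω} := fun u => hm measurableSet_Ioi
  rcases le_or_gt 0 t with ht | ht
  · rw [hpre, measure_compl (hms t) (measure_ne_top μ _)]
    · rw [hd t ht, if_pos ht, measure_univ,
        ENNReal.ofReal_sub _ (exp_pos _).le]
      simp
  · rw [if_neg (not_le.2 ht), ENNReal.ofReal_zero]
    have hsub : Y ⁻¹' Iic t ⊆ {ω | 0 < Y ω}ᶜ := by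
      intro ω hω
      simp only [mem_preimage, mem_Iic] at hω
      simp only [mem_compl_iff, mem_setOf_eq, not_lt]
      linarith
    refine measure_mono_null hsub ?_
    rw [measure_compl (hms 0) (measure_ne_top μ _), hd 0 le_rfl]
    simp

lemma aux_joint_map {Ω : Type*} [MeasurableSpace Ω] (μ : Measure Ω) [IsProbabilityMeasure μ]
    (k : ℕ) (X : Fin k → Ω → ℝ) (hmeas : ∀ i, Measurable (X i))
    (hindep : iIndepFun X μ)
    (hmap : ∀ i, μ.map (X i) = expMeasure 1) :
    μ.map (fun ω i => X i ω) = Measure.pi (fun _ : Fin k => expMeasure 1) := by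
  haveI : IsProbabilityMeasure (expMeasure 1) := isProbabilityMeasure_expMeasure one_pos
  refine (Measure.pi_eq fun s hs => ?_).symm
  have hφ : Measurable (fun ω i => X i ω) := measurable_pi_lambda _ hmeas
  rw [Measure.map_apply hφ (MeasurableSet.univ_pi hs)]
  have hpre : (fun ω i => X i ω) ⁻¹' univ.pi s = ⋂ i ∈ Finset.univ, X i ⁻¹' s i := by
    ext ω; simp [Set.mem_univ_pi]
  rw [hpre, hindep.measure_inter_preimage_eq_mul Finset.univ (fun i _ => hs i)]
  refine Finset.prod_congr rfl (fun i _ => ?_)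
  rw [← Measure.map_apply (hmeas i) (hs i), hmap i]

lemma aux_event (c : ℝ) (hc : 0 < c) (n : ℕ) (i : Fin (n + 1)) :
    Measure.pi (fun _ : Fin (n + 1) => expMeasure 1) {x | ∀ j, x j ≤ x i + c}
      = ENNReal.ofReal ((1 - (1 - exp (-c)) ^ (n + 1)) / ((n + 1) * exp (-c))) := by
  haveI : IsProbabilityMeasure (expMeasure 1) := isProbabilityMeasure_expMeasure one_pos
  set ν := expMeasure 1 with hν
  -- reduce to the product structure
  set T : Set (ℝ × (Fin n → ℝ)) := {p | ∀ j, p.2 j ≤ p.1 + c} with hT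
  have hTm : MeasurableSet T := by
    have : T = ⋂ j, {p : ℝ × (Fin n → ℝ) | p.2 j ≤ p.1 + c} := by ext p; simp [hT]
    rw [this]
    exact MeasurableSet.iInter fun j =>
      measurableSet_le (by fun_prop) (by fun_prop)
  have hpre : {x : Fin (n + 1) → ℝ | ∀ j, x j ≤ x i + c}
      = (MeasurableEquiv.piFinSuccAbove (fun _ => ℝ) i) ⁻¹' T := by
    ext x
    simp only [mem_setOf_eq, mem_preimage, MeasurableEquiv.piFinSuccAbove_apply, hT]
    rw [Fin.forall_iff_succAbove i]
    have : x i ≤ x i + c := le_add_of_nonneg_right hc.le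
    tauto
  rw [hpre, ← Measure.map_apply (MeasurableEquiv.piFinSuccAbove (fun _ => ℝ) i).measurable hTm,
    (measurePreserving_piFinSuccAbove (fun _ : Fin (n+1) => ν) i).map_eq,
    Measure.prod_apply hTm]
  have hsect : ∀ y : ℝ, (Prod.mk y ⁻¹' T) = univ.pi (fun _ : Fin n => Iic (y + c)) := by
    intro y; ext z; simp [hT, Set.mem_univ_pi, Pi.le_def]
  have h1 : ∀ y : ℝ, Measure.pi (fun _ : Fin n => ν) (Prod.mk y ⁻¹' T)
      = (ν (Iic (y + c))) ^ n := by
    intro y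
    rw [hsect y, Measure.pi_pi, Finset.prod_const, Finset.card_univ, Fintype.card_fin]
  simp_rw [h1]
  -- now a lintegral over ν
  have hν2 : ν = volume.withDensity (exponentialPDF 1) := rfl
  have hpdfm : Measurable (exponentialPDF 1) :=
    (measurable_exponentialPDFReal 1).ennreal_ofReal
  have hFm : Measurable (fun y : ℝ => (ν (Iic (y + c))) ^ n) := by
    have : ∀ y : ℝ, ν (Iic (y + c)) = ENNReal.ofReal (if 0 ≤ y + c then 1 - exp (-(y+c)) else 0) :=
      fun y => aux_expMeasure_Iic (y + c)
    simp_rw [this]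
    apply Measurable.pow_const
    apply Measurable.ennreal_ofReal
    apply Measurable.ite
    · exact measurableSet_le measurable_const (measurable_id.add_const c)
    · fun_prop
    · exact measurable_const
  have hstep : (∫⁻ x, ν (Iic (x + c)) ^ n ∂ν)
      = ∫⁻ y, (exponentialPDF 1 * fun y => ν (Iic (y + c)) ^ n) y ∂volume :=
    lintegral_withDensity_eq_lintegral_mul volume hpdfm hFm
  rw [hstep]
  have hsplit : ∫⁻ y, (exponentialPDF 1 * fun y => ν (Iic (y + c)) ^ n) y
      = (∫⁻ y in Iio (0:ℝ), (exponentialPDF 1 * fun y => ν (Iic (y + c)) ^ n) y)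
        + ∫⁻ y in Ici (0:ℝ), (exponentialPDF 1 * fun y => ν (Iic (y + c)) ^ n) y := by
    rw [← lintegral_add_compl _ measurableSet_Iio, compl_Iio]
  rw [hsplit]
  have hzero : (∫⁻ y in Iio (0:ℝ), (exponentialPDF 1 * fun y => ν (Iic (y + c)) ^ n) y) = 0 := by
    rw [setLIntegral_congr_fun (g := fun _ => 0) measurableSet_Iio
      (fun y (hy : y < 0) => by
        simp [exponentialPDF_of_neg hy])]
    simp
  rw [hzero, zero_add]
  have heq : ∫⁻ y in Ici (0:ℝ), (exponentialPDF 1 * fun y => ν (Iic (y + c)) ^ n) y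
      = ∫⁻ y in Ici (0:ℝ), ENNReal.ofReal (exp (-y) * (1 - exp (-(y + c))) ^ n) := by
    refine setLIntegral_congr_fun measurableSet_Ici (fun y (hy : 0 ≤ y) => ?_)
    have hyc : 0 ≤ y + c := by linarith
    have h1e : 0 ≤ 1 - exp (-(y + c)) := by
      have : exp (-(y + c)) ≤ 1 := exp_le_one_iff.2 (by linarith)
      linarith
    simp only [Pi.mul_apply]
    rw [exponentialPDF_of_nonneg hy, aux_expMeasure_Iic, if_pos hyc, one_mul,
      ← ENNReal.ofReal_pow h1e, ← ENNReal.ofReal_mul (exp_pos _).le]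
    norm_num
  rw [heq]
  have hint : IntegrableOn (fun y => exp (-y) * (1 - exp (-(y + c))) ^ n) (Ici (0:ℝ)) := by
    have hbase : IntegrableOn (fun y : ℝ => exp (-1 * y)) (Ici (0:ℝ)) :=
      (exp_neg_integrableOn_Ioi 0 one_pos).congr_set_ae Ioi_ae_eq_Ici.symm
    refine Integrable.mono (by simpa [IntegrableOn] using hbase) ?_ ?_
    · exact (Continuous.aestronglyMeasurable (by fun_prop)).restrict
    · filter_upwards [ae_restrict_mem measurableSet_Ici] with y hy
      have hy0 : (0:ℝ) ≤ y := hy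
      have h1 : 0 ≤ 1 - exp (-(y + c)) := by
        have : exp (-(y + c)) ≤ 1 := exp_le_one_iff.2 (by linarith)
        linarith
      have h2 : 1 - exp (-(y + c)) ≤ 1 := by linarith [exp_pos (-(y + c))]
      have hb : exp (-y) * (1 - exp (-(y+c))) ^ n ≤ exp (-y) * 1 := by
        gcongr
        exact pow_le_one₀ h1 h2
      simp only [Real.norm_eq_abs, abs_of_nonneg (mul_nonneg (exp_pos (-y)).le (pow_nonneg h1 n)),
        neg_one_mul]
      simpa using hb
  have hnn : 0 ≤ᵐ[volume.restrict (Ici (0:ℝ))] fun y => exp (-y) * (1 - exp (-(y + c))) ^ n := by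
    filter_upwards [ae_restrict_mem measurableSet_Ici] with y hy
    have hyc : (0:ℝ) ≤ y + c := by have : (0:ℝ) ≤ y := hy; linarith
    have h1e : 0 ≤ 1 - exp (-(y + c)) := by
      have : exp (-(y + c)) ≤ 1 := exp_le_one_iff.2 (by linarith)
      linarith
    positivity
  rw [← ofReal_integral_eq_lintegral_ofReal hint hnn]
  rw [integral_Ici_eq_integral_Ioi, aux_integral c hc n]

/-- For i.i.d. `Exp(1)` variables `X₁, …, X_k` and `Zᵢ` the indicator of
`Xᵢ ≥ maxⱼ Xⱼ - c`, we have `E[∑ᵢ Zᵢ] = 1 + ∑_{i=1}^{k-1} (1 - e^{-c})^i ≤ e^c`. -/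
theorem stmt_4 {Ω : Type*} [MeasurableSpace Ω] (μ : Measure Ω) [IsProbabilityMeasure μ]
    (k : ℕ) (hk : 0 < k) (c : ℝ) (hc : 0 < c)
    (X : Fin k → Ω → ℝ)
    (hmeas : ∀ i, Measurable (X i))
    (hindep : iIndepFun X μ)
    (hdist : ∀ i, ∀ t : ℝ, 0 ≤ t → μ {ω | t < X i ω} = ENNReal.ofReal (Real.exp (-t))) :
    (∫ ω, ((Finset.univ.filter (fun i : Fin k =>
          Finset.univ.sup' ⟨⟨0, hk⟩, Finset.mem_univ _⟩ (fun j => X j ω) - c ≤ X i ω)).card : ℝ) ∂μ)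
        = 1 + ∑ i ∈ Finset.Icc 1 (k - 1), (1 - Real.exp (-c)) ^ i ∧
    (∫ ω, ((Finset.univ.filter (fun i : Fin k =>
          Finset.univ.sup' ⟨⟨0, hk⟩, Finset.mem_univ _⟩ (fun j => X j ω) - c ≤ X i ω)).card : ℝ) ∂μ)
        ≤ Real.exp c := by
  obtain ⟨n, rfl⟩ : ∃ n, k = n + 1 := ⟨k - 1, (Nat.succ_pred_eq_of_pos hk).symm⟩
  set a := exp (-c) with ha
  have ha0 : 0 < a := exp_pos _
  have ha1 : a ≤ 1 := exp_le_one_iff.2 (by linarith)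
  set r := (1 - (1 - a) ^ (n + 1)) / ((n + 1) * a) with hr
  have hpow0 : 0 ≤ (1 - a) ^ (n + 1) := pow_nonneg (by linarith) _
  have hpow1 : (1 - a) ^ (n + 1) ≤ 1 := pow_le_one₀ (by linarith) (by linarith)
  have hr0 : 0 ≤ r := div_nonneg (by linarith) (by positivity)
  -- events
  set φ : Ω → (Fin (n + 1) → ℝ) := fun ω i => X i ω with hφdef
  have hφ : Measurable φ := measurable_pi_lambda _ hmeas
  set S : Fin (n + 1) → Set (Fin (n + 1) → ℝ) := fun i => {x | ∀ j, x j ≤ x i + c} with hS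
  have hSm : ∀ i, MeasurableSet (S i) := by
    intro i
    have : S i = ⋂ j, {x : Fin (n + 1) → ℝ | x j ≤ x i + c} := by ext x; simp [hS]
    rw [this]
    exact MeasurableSet.iInter fun j => measurableSet_le (by fun_prop) (by fun_prop)
  have hμA : ∀ i, μ (φ ⁻¹' S i) = ENNReal.ofReal r := by
    intro i
    rw [← Measure.map_apply hφ (hSm i),
      aux_joint_map μ (n + 1) X hmeas hindep
        (fun i => aux_map_eq μ (X i) (hmeas i) (hdist i)),
      aux_event c hc n i]
  -- rewrite integrand
  have hiff : ∀ (i : Fin (n + 1)) (ω : Ω),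
      (Finset.univ.sup' ⟨⟨0, hk⟩, Finset.mem_univ _⟩ (fun j => X j ω) - c ≤ X i ω)
        ↔ ω ∈ φ ⁻¹' S i := by
    intro i ω
    rw [sub_le_iff_le_add]
    exact (Finset.sup'_le_iff _ _).trans (by simp [hS, hφdef])
  have hint_eq : ∀ ω : Ω, ((Finset.univ.filter (fun i : Fin (n + 1) =>
        Finset.univ.sup' ⟨⟨0, hk⟩, Finset.mem_univ _⟩ (fun j => X j ω) - c ≤ X i ω)).card : ℝ)
      = ∑ i : Fin (n + 1), Set.indicator (φ ⁻¹' S i) (fun _ => (1:ℝ)) ω := by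
    intro ω
    rw [Finset.card_filter]
    push_cast
    refine Finset.sum_congr rfl (fun i _ => ?_)
    rw [Set.indicator_apply]
    exact if_congr (hiff i ω) rfl rfl
  have hE : (∫ ω, ((Finset.univ.filter (fun i : Fin (n + 1) =>
        Finset.univ.sup' ⟨⟨0, hk⟩, Finset.mem_univ _⟩ (fun j => X j ω) - c ≤ X i ω)).card : ℝ) ∂μ)
      = (n + 1 : ℝ) * r := by
    rw [integral_congr_ae (ae_of_all _ hint_eq),
      integral_finset_sum _ (fun i _ => (integrable_const (1:ℝ)).indicator (hφ (hSm i)))]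
    have : ∀ i : Fin (n + 1), (∫ ω, Set.indicator (φ ⁻¹' S i) (fun _ => (1:ℝ)) ω ∂μ) = r := by
      intro i
      show (∫ ω, Set.indicator (φ ⁻¹' S i) (1 : Ω → ℝ) ω ∂μ) = r
      rw [integral_indicator_one (hφ (hSm i)), measureReal_def, hμA i, ENNReal.toReal_ofReal hr0]
    simp only [this, Finset.sum_const, Finset.card_univ, Fintype.card_fin, nsmul_eq_mul]
    push_cast
    ring
  -- geometric series value
  have hgeom : (n + 1 : ℝ) * r = 1 + ∑ i ∈ Finset.Icc 1 (n + 1 - 1), (1 - a) ^ i := by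
    have h1 : (n + 1 : ℝ) * r = (1 - (1 - a) ^ (n + 1)) / a := by
      rw [hr]; field_simp
    have h2 : ∑ i ∈ Finset.range (n + 1), (1 - a) ^ i = (1 - (1 - a) ^ (n + 1)) / a := by
      rw [geom_sum_eq (by intro h; apply ha0.ne'; linarith) (n + 1),
        show (1 - a - 1 : ℝ) = -a by ring, div_neg, ← neg_div, neg_sub]
    have h3 : ∑ i ∈ Finset.range (n + 1), (1 - a) ^ i
        = 1 + ∑ i ∈ Finset.Icc 1 n, (1 - a) ^ i := by
      rw [Finset.sum_range_succ', ← Finset.Ico_add_one_right_eq_Icc, Finset.sum_Ico_eq_sum_range]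
      simp only [Nat.add_sub_cancel, pow_zero]
      rw [add_comm]
      congr 1
      exact Finset.sum_congr rfl (fun i _ => by rw [add_comm 1 i])
    simp only [Nat.add_sub_cancel]
    rw [h1, ← h2, h3]
  constructor
  · rw [hE, hgeom]
  · rw [hE]
    have h1 : (n + 1 : ℝ) * r = (1 - (1 - a) ^ (n + 1)) / a := by
      rw [hr]; field_simp
    rw [h1]
    have hexp : exp c = 1 / a := by
      rw [ha, exp_neg]; field_simp
    rw [hexp]
    gcongr
    · linarith
end

section
/- For natural numbers Δ ≥ 0, d with d > 2Δ, d+1 ≤ n, and n ≥ 2: (binomial(d+1, Δ+1)) · (1 - (d-Δ)/(d+1))^{10(Δ+1)·log n} ≤ n^{-4}. -/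
theorem stmt_17 (Δ d n : ℕ) (hdΔ : 2 * Δ < d) (hdn : d + 1 ≤ n) (hn : 2 ≤ n) :
    ((d + 1).choose (Δ + 1) : ℝ) *
      (1 - ((d : ℝ) - (Δ : ℝ)) / ((d : ℝ) + 1)) ^ (10 * ((Δ : ℝ) + 1) * Real.log n)
      ≤ (n : ℝ) ^ (-4 : ℝ) := by
  have hn1 : (1:ℝ) ≤ (n:ℝ) := by exact_mod_cast Nat.one_le_of_lt hn
  have hnpos : (0:ℝ) < (n:ℝ) := lt_of_lt_of_le one_pos hn1
  have hlogn : 0 < Real.log n := Real.log_pos (by exact_mod_cast hn)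
  set t : ℝ := 10 * ((Δ:ℝ) + 1) * Real.log n with ht_def
  have ht : 0 ≤ t := by positivity
  have hd1 : (0:ℝ) < (d:ℝ) + 1 := by positivity
  have hbase : 1 - ((d:ℝ) - (Δ:ℝ)) / ((d:ℝ)+1) = ((Δ:ℝ)+1)/((d:ℝ)+1) := by
    field_simp; ring
  have hdΔ' : (2:ℝ)*(Δ:ℝ) + 1 ≤ (d:ℝ) := by exact_mod_cast hdΔ
  have hb_half : ((Δ:ℝ)+1)/((d:ℝ)+1) ≤ 1/2 := by
    rw [div_le_div_iff₀ hd1 (by norm_num)]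
    nlinarith
  have hb_pos : (0:ℝ) ≤ ((Δ:ℝ)+1)/((d:ℝ)+1) := by positivity
  rw [hbase]
  have h1 : (((d+1).choose (Δ+1)) : ℝ) ≤ (n:ℝ) ^ ((Δ:ℝ)+1) := by
    have : ((d+1).choose (Δ+1)) ≤ n ^ (Δ+1) :=
      le_trans (Nat.choose_le_pow _ _) (Nat.pow_le_pow_left hdn _)
    calc (((d+1).choose (Δ+1)) : ℝ) ≤ ((n ^ (Δ+1) : ℕ) : ℝ) := by exact_mod_cast this
    _ = (n:ℝ) ^ ((Δ:ℝ)+1) := by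
        push_cast
        rw [← Real.rpow_natCast (n:ℝ) (Δ+1)]
        push_cast
        ring_nf
  have h2 : (((Δ:ℝ)+1)/((d:ℝ)+1)) ^ t ≤ ((1:ℝ)/2) ^ t :=
    Real.rpow_le_rpow hb_pos hb_half ht
  have h3 : ((1:ℝ)/2) ^ t ≤ (n:ℝ) ^ (-(5*((Δ:ℝ)+1))) := by
    rw [Real.rpow_def_of_pos (by norm_num), Real.rpow_def_of_pos hnpos]
    apply Real.exp_le_exp.mpr
    have hlog2 : Real.log (1/2) = -Real.log 2 := by
      rw [one_div, Real.log_inv]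
    rw [hlog2, ht_def]
    have h2g : (0.6931471803 : ℝ) < Real.log 2 := Real.log_two_gt_d9
    nlinarith [hlogn, h2g, (Nat.cast_nonneg Δ : (0:ℝ) ≤ Δ),
      mul_pos hlogn (lt_trans (by norm_num : (0:ℝ) < 0.6931471803) h2g)]
  calc (((d+1).choose (Δ+1)) : ℝ) * (((Δ:ℝ)+1)/((d:ℝ)+1)) ^ t
      ≤ (n:ℝ) ^ ((Δ:ℝ)+1) * (n:ℝ) ^ (-(5*((Δ:ℝ)+1))) :=
        mul_le_mul h1 (h2.trans h3) (Real.rpow_nonneg hb_pos t) (Real.rpow_nonneg (le_of_lt hnpos) _)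
    _ = (n:ℝ) ^ (((Δ:ℝ)+1) + (-(5*((Δ:ℝ)+1)))) := (Real.rpow_add hnpos _ _).symm
    _ ≤ (n:ℝ) ^ (-4 : ℝ) := by
        apply Real.rpow_le_rpow_of_exponent_le hn1
        nlinarith [(Nat.cast_nonneg Δ : (0:ℝ) ≤ Δ)]
end
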